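/- Let f : A → ℝⁿ and g : B → ℝⁿ be continuous maps on compact spaces A, B with f(A) ∩ g(B) = ∅, and let P : ℝⁿ → ℝⁿ be the orthogonal projection onto the subspace {x : x_{m+1} = ⋯ = x_n = 0}. If P(f(A)) ∩ P(g(B)) = ∅, then the maps H_t(x,y) = (f^t(x) - g^t(y))/‖f^t(x) - g^t(y)‖, where f^t multiplies the last n-m coordinates of f by (1-t) and similarly for g^t, form a well-defined homotopy on A × B × [0,1] from ξ_{fg}(x,y) = (f(x)-g(y))/‖f(x)-g(y)‖ to a map taking values in the subsphere S^{m-1} = {v ∈ S^{n-1} : v_{m+1} = ⋯ = v_n = 0}. -/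

import Mathlib

/-- Scale the last `n - m` coordinates by `1 - t`. -/
noncomputable def scaleTail (n m : ℕ) (t : ℝ) (v : EuclideanSpace ℝ (Fin n)) :
    EuclideanSpace ℝ (Fin n) :=
  WithLp.toLp 2 (fun i : Fin n => if (i : ℕ) < m then v i else (1 - t) * v i)

lemma scaleTail_one_eq_of_eq {n m : ℕ} {t : ℝ} {v w : EuclideanSpace ℝ (Fin n)}
    (h : scaleTail n m t v = scaleTail n m t w) :
    scaleTail n m 1 v = scaleTail n m 1 w := by
  ext i
  have := congrArg (fun w => w i) h
  simp only [scaleTail, PiLp.toLp_apply] at this ⊢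
  by_cases hi : (i : ℕ) < m <;> simp [hi] at this ⊢ <;> simp [this]

lemma scaleTail_zero {n m : ℕ} (v : EuclideanSpace ℝ (Fin n)) :
    scaleTail n m 0 v = v := by
  ext i; simp [scaleTail]

lemma scaleTail_cont {n m : ℕ} :
    Continuous (fun p : ℝ × EuclideanSpace ℝ (Fin n) => scaleTail n m p.1 p.2) := by
  refine (PiLp.continuous_toLp 2 _).comp ?_
  apply continuous_pi
  intro i
  by_cases hi : (i : ℕ) < m <;> simp only [scaleTail, hi, if_true, if_false]
  · exact (EuclideanSpace.proj i).continuous.comp continuous_snd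
  · exact ((continuous_const.sub continuous_fst)).mul
      ((EuclideanSpace.proj i).continuous.comp continuous_snd)

theorem projection_homotopy (n m : ℕ) (hmn : m < n)
    (A B : Type*) [TopologicalSpace A] [TopologicalSpace B]
    [CompactSpace A] [CompactSpace B]
    (f : A → EuclideanSpace ℝ (Fin n)) (g : B → EuclideanSpace ℝ (Fin n))
    (hf : Continuous f) (hg : Continuous g)
    (hdisj : ∀ x y, f x ≠ g y)
    (hproj : ∀ x y, scaleTail n m 1 (f x) ≠ scaleTail n m 1 (g y)) :
    (∀ (t : ℝ), t ∈ Set.Icc (0:ℝ) 1 → ∀ x y, scaleTail n m t (f x) ≠ scaleTail n m t (g y)) ∧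
    ∃ H : A × B × unitInterval → EuclideanSpace ℝ (Fin n),
      (∀ x y t, H (x, y, t) =
        ‖scaleTail n m t (f x) - scaleTail n m t (g y)‖⁻¹ •
          (scaleTail n m t (f x) - scaleTail n m t (g y))) ∧
      Continuous H ∧
      (∀ x y, H (x, y, 0) = ‖f x - g y‖⁻¹ • (f x - g y)) ∧
      (∀ x y, ‖H (x, y, 1)‖ = 1 ∧ ∀ i : Fin n, m ≤ (i : ℕ) → H (x, y, 1) i = 0) := by
  have hne : ∀ (t : ℝ) (x : A) (y : B),
      scaleTail n m t (f x) ≠ scaleTail n m t (g y) := by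
    intro t x y h
    exact hproj x y (scaleTail_one_eq_of_eq h)
  refine ⟨fun t _ x y => hne t x y, ?_⟩
  set F : A × B × unitInterval → EuclideanSpace ℝ (Fin n) :=
    fun p => scaleTail n m (p.2.2 : ℝ) (f p.1) - scaleTail n m (p.2.2 : ℝ) (g p.2.1) with hF
  have hFcont : Continuous F := by
    apply Continuous.sub
    · exact scaleTail_cont.comp
        ((continuous_subtype_val.comp (continuous_snd.comp continuous_snd)).prodMk
          (hf.comp continuous_fst))
    · exact scaleTail_cont.comp
        ((continuous_subtype_val.comp (continuous_snd.comp continuous_snd)).prodMk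
          (hg.comp (continuous_fst.comp continuous_snd)))
  have hFne : ∀ p, F p ≠ 0 := by
    intro p hp
    exact hne _ p.1 p.2.1 (sub_eq_zero.mp hp)
  refine ⟨fun p => ‖F p‖⁻¹ • F p, fun x y t => rfl, ?_, ?_, ?_⟩
  · exact ((hFcont.norm.inv₀ (fun p => norm_ne_zero_iff.mpr (hFne p))).smul hFcont)
  · intro x y
    simp [hF, scaleTail_zero]
  · intro x y
    refine ⟨norm_smul_inv_norm (hFne (x, y, 1)), ?_⟩
    intro i hi
    have h0 : F (x, y, 1) i = 0 := by
      have h1 : scaleTail n m ((1 : unitInterval) : ℝ) (f x) i = 0 := by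
        simp [scaleTail, Nat.not_lt.mpr hi]
      have h2 : scaleTail n m ((1 : unitInterval) : ℝ) (g y) i = 0 := by
        simp [scaleTail, Nat.not_lt.mpr hi]
      show scaleTail n m ((1 : unitInterval) : ℝ) (f x) i -
        scaleTail n m ((1 : unitInterval) : ℝ) (g y) i = 0
      rw [h1, h2, sub_zero]
    show ‖F (x, y, 1)‖⁻¹ • F (x, y, 1) i = 0
    rw [h0, smul_zero]
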